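/- For any metric space (V, d), any schedule ψ visiting a set of points, and the schedule ψ' obtained by visiting the distinct points of ψ in order of first appearance, searching each point the same total number of times as ψ does: the weight of ψ' is at most the weight of ψ and their detection probabilities are equal. Hence there exists an optimal schedule that never revisits a point. -/

import Mathlib

open Finset

/-- Weight of a schedule in a metric space: a repeated point is a search
step (cost `c`), a move between distinct points costs their distance. -/
def weightM {V : Type*} [MetricSpace V] [DecidableEq V] (c : V → ℝ) : List V → ℝ
  | [] => 0
  | [_] => 0
  | a :: b :: l => (if a = b then c a else dist a b) + weightM c (b :: l)

/-- Number of search steps at point `x`. -/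
def sCount {V : Type*} [DecidableEq V] (x : V) : List V → ℕ
  | a :: b :: l => (if a = b ∧ b = x then 1 else 0) + sCount x (b :: l)
  | _ => 0

/-- A schedule never revisits a point: it is a concatenation of blocks of
repetitions of pairwise distinct points. -/
def noRevisit {V : Type*} (l : List V) : Prop :=
  ∃ (pts : List V) (k : V → ℕ), pts.Nodup ∧
    l = (pts.map fun x => List.replicate (k x) x).flatten

set_option linter.unusedSectionVars false

namespace NoRev

variable {V : Type*} [MetricSpace V] [DecidableEq V] (c : V → ℝ)

def pathD : List V → ℝ
  | a :: b :: l => dist a b + pathD (b :: l)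
  | _ => 0

def sCost : List V → ℝ
  | a :: b :: l => (if a = b then c a else 0) + sCost (b :: l)
  | _ => 0

def fdd : List V → List V
  | [] => []
  | a :: l => a :: (fdd l).erase a

variable {c}

theorem pathD_nonneg : ∀ l : List V, 0 ≤ pathD l
  | [] => le_refl _
  | [_] => le_refl _
  | a :: b :: l => by
      have := pathD_nonneg (b :: l)
      simp only [pathD]
      positivity

theorem fdd_nodup : ∀ l : List V, (fdd l).Nodup
  | [] => List.nodup_nil
  | a :: l => by
      have h := fdd_nodup l
      simp only [fdd]
      exact List.Nodup.cons (fun hm => (h.mem_erase_iff.mp hm).1 rfl) (h.erase a)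

theorem mem_fdd {x : V} : ∀ {l : List V}, x ∈ fdd l ↔ x ∈ l
  | [] => Iff.rfl
  | a :: l => by
      simp only [fdd, List.mem_cons, (fdd_nodup l).mem_erase_iff, mem_fdd (l := l)]
      by_cases hxa : x = a <;> simp [hxa]

theorem pathD_erase (a : V) : ∀ (l : List V) (x : V), pathD (x :: l.erase a) ≤ pathD (x :: l)
  | [], x => le_refl _
  | y :: t, x => by
      by_cases hay : y = a
      · subst hay
        rw [List.erase_cons_head]
        cases t with
        | nil => simpa [pathD] using dist_nonneg (x := x) (y := y)
        | cons z t' =>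
            simp only [pathD]
            have h1 : dist x z ≤ dist x y + dist y z := dist_triangle x y z
            linarith
      · rw [List.erase_cons_tail (by simpa using fun h => hay h)]
        simp only [pathD]
        have := pathD_erase a t y
        linarith

theorem weight_lower : ∀ l : List V, sCost c l + pathD (fdd l) ≤ weightM c l
  | [] => by simp [sCost, pathD, fdd, weightM]
  | [a] => by simp [sCost, pathD, fdd, weightM]
  | a :: b :: l => by
      have ih := weight_lower (b :: l)
      by_cases hab : a = b
      · subst hab
        have hfd : fdd (a :: a :: l) = fdd (a :: l) := by
          simp [fdd, List.erase_cons_head]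
        rw [hfd]
        simp only [weightM, sCost, if_pos rfl, if_true]
        linarith
      · have he : (b :: (fdd l).erase b).erase a = b :: ((fdd l).erase b).erase a := by
          rw [List.erase_cons, if_neg (by simpa using fun h : b = a => hab h.symm)]
        have hfd : fdd (a :: b :: l) = a :: b :: ((fdd l).erase b).erase a := by
          simp only [fdd]; rw [he]
        rw [hfd]
        simp only [weightM, sCost, if_neg hab, pathD]
        have h2 : pathD (b :: ((fdd l).erase b).erase a) ≤ pathD (b :: (fdd l).erase b) :=
          pathD_erase a _ b
        have h3 : pathD (fdd (b :: l)) = pathD (b :: (fdd l).erase b) := by simp [fdd]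
        linarith

theorem sCount_eq_zero {x : V} : ∀ {l : List V}, x ∉ l → sCount x l = 0
  | [], _ => rfl
  | [a], _ => rfl
  | a :: b :: l, h => by
      have hb : ¬ (a = b ∧ b = x) := fun ⟨_, h2⟩ => h (by simp [h2.symm])
      have : x ∉ b :: l := fun hm => h (List.mem_cons_of_mem _ hm)
      simp [sCount, hb, sCount_eq_zero this]

theorem sCost_eq : ∀ (l : List V) (t : Finset V), (∀ x ∈ l, x ∈ t) →
    sCost c l = ∑ x ∈ t, (sCount x l : ℝ) * c x
  | [], t, _ => by simp [sCost, sCount]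
  | [a], t, _ => by simp [sCost, sCount]
  | a :: b :: l, t, h => by
      have ih := sCost_eq (b :: l) t (fun x hx => h x (List.mem_cons_of_mem _ hx))
      have hbt : b ∈ t := h b (by simp)
      simp only [sCost, sCount]
      rw [ih]
      push_cast
      simp only [add_mul, Finset.sum_add_distrib]
      by_cases hab : a = b
      · simp only [hab, true_and, if_pos rfl]
        have : ∑ x ∈ t, (if b = x then (1:ℝ) else 0) * c x = c b := by
          rw [Finset.sum_congr rfl (fun x _ => by rw [ite_mul, one_mul, zero_mul]),
            Finset.sum_ite_eq t b c, if_pos hbt]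
        rw [this, if_true]
      · simp [hab]

theorem weight_replicate (a : V) : ∀ (n : ℕ) (l : List V),
    weightM c (List.replicate (n + 1) a ++ l) = n * c a + weightM c (a :: l)
  | 0, l => by simp
  | n + 1, l => by
      have ih := weight_replicate a n l
      have h1 : List.replicate (n + 2) a ++ l = a :: (List.replicate (n + 1) a ++ l) := by
        rw [List.replicate_succ, List.cons_append]
      have h2 : List.replicate (n + 1) a ++ l = a :: (List.replicate n a ++ l) := by
        rw [List.replicate_succ, List.cons_append]
      rw [h1]
      conv_lhs => rw [h2]
      have h3 : weightM c (a :: a :: (List.replicate n a ++ l))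
          = c a + weightM c (a :: (List.replicate n a ++ l)) := by simp [weightM]
      rw [h3, ← h2, ih]
      push_cast; ring

theorem sCount_replicate (x a : V) : ∀ (n : ℕ) (l : List V),
    sCount x (List.replicate (n + 1) a ++ l) = (if a = x then n else 0) + sCount x (a :: l)
  | 0, l => by simp
  | n + 1, l => by
      have ih := sCount_replicate x a n l
      have h1 : List.replicate (n + 2) a ++ l = a :: (List.replicate (n + 1) a ++ l) := by
        rw [List.replicate_succ, List.cons_append]
      have h2 : List.replicate (n + 1) a ++ l = a :: (List.replicate n a ++ l) := by
        rw [List.replicate_succ, List.cons_append]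
      rw [h1]
      conv_lhs => rw [h2]
      have h3 : sCount x (a :: a :: (List.replicate n a ++ l))
          = (if a = x then 1 else 0) + sCount x (a :: (List.replicate n a ++ l)) := by
        simp [sCount]
      rw [h3, ← h2, ih]
      by_cases hax : a = x <;> simp [hax] <;> ring

theorem weight_blocks (k : V → ℕ) : ∀ (pts : List V), pts.Nodup →
    weightM c ((pts.map fun x => List.replicate (k x + 1) x).flatten)
      ≤ (pts.map fun x => (k x : ℝ) * c x).sum + pathD pts
  | [], _ => by simp [weightM, pathD]
  | [a], _ => by
      have h := weight_replicate (c := c) a (k a) []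
      rw [List.append_nil] at h
      simp only [List.map_cons, List.map_nil, List.flatten_cons, List.flatten_nil,
        List.append_nil, List.sum_cons, List.sum_nil]
      rw [h]
      simp [weightM, pathD]
  | a :: b :: rest, h => by
      obtain ⟨hanotin, htail⟩ := List.nodup_cons.mp h
      have hab : a ≠ b := fun he => hanotin (he ▸ (List.mem_cons_self : b ∈ b :: rest))
      have ih := weight_blocks k (b :: rest) htail
      have hsplit : ((b :: rest).map fun x => List.replicate (k x + 1) x).flatten
          = b :: (List.replicate (k b) b ++ ((rest.map fun x => List.replicate (k x + 1) x).flatten)) := by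
        simp [List.replicate_succ]
      have hflat : ((a :: b :: rest).map fun x => List.replicate (k x + 1) x).flatten
          = List.replicate (k a + 1) a ++ (((b :: rest).map fun x => List.replicate (k x + 1) x).flatten) := by
        simp
      rw [hflat, hsplit, weight_replicate a (k a)]
      have h4 : weightM c (a :: b :: (List.replicate (k b) b ++ ((rest.map fun x => List.replicate (k x + 1) x).flatten)))
          = dist a b + weightM c (b :: (List.replicate (k b) b ++ ((rest.map fun x => List.replicate (k x + 1) x).flatten))) := by
        simp [weightM, hab]
      rw [h4, ← hsplit]
      have h5 : pathD (a :: b :: rest) = dist a b + pathD (b :: rest) := by simp [pathD]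
      simp only [List.map_cons, List.sum_cons] at ih ⊢
      rw [h5]
      linarith

theorem sCount_blocks (x : V) (k : V → ℕ) : ∀ (pts : List V), pts.Nodup →
    sCount x ((pts.map fun y => List.replicate (k y + 1) y).flatten)
      = if x ∈ pts then k x else 0
  | [], _ => by simp [sCount]
  | [a], _ => by
      have h := sCount_replicate (x := x) a (k a) []
      rw [List.append_nil] at h
      simp only [List.map_cons, List.map_nil, List.flatten_cons, List.flatten_nil,
        List.append_nil]
      rw [h]
      have h0 : sCount x [a] = 0 := rfl
      rw [h0]
      by_cases hax : a = x
      · subst hax; simp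
      · simp [hax, Ne.symm hax]
  | a :: b :: rest, h => by
      obtain ⟨hanotin, htail⟩ := List.nodup_cons.mp h
      have hab : a ≠ b := fun he => hanotin (he ▸ (List.mem_cons_self : b ∈ b :: rest))
      have ih := sCount_blocks x k (b :: rest) htail
      have hsplit : ((b :: rest).map fun y => List.replicate (k y + 1) y).flatten
          = b :: (List.replicate (k b) b ++ ((rest.map fun y => List.replicate (k y + 1) y).flatten)) := by
        simp [List.replicate_succ]
      have hflat : ((a :: b :: rest).map fun y => List.replicate (k y + 1) y).flatten
          = List.replicate (k a + 1) a ++ (((b :: rest).map fun y => List.replicate (k y + 1) y).flatten) := by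
        simp
      rw [hflat, hsplit, sCount_replicate x a (k a)]
      have h4 : sCount x (a :: b :: (List.replicate (k b) b ++ ((rest.map fun y => List.replicate (k y + 1) y).flatten)))
          = sCount x (b :: (List.replicate (k b) b ++ ((rest.map fun y => List.replicate (k y + 1) y).flatten))) := by
        have hne : ¬(a = b ∧ b = x) := fun g => hab g.1
        simp only [sCount, if_neg hne, Nat.zero_add]
      rw [h4, ← hsplit, ih]
      by_cases hax : x = a
      · subst hax
        simp [hanotin, fun g : x ∈ b :: rest => hanotin g]
      · rw [if_neg (fun g : a = x => hax g.symm), Nat.zero_add]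
        have h6 : (x ∈ a :: b :: rest) = (x ∈ b :: rest) := by
          simp [List.mem_cons, hax]
        simp only [h6]

theorem mem_blocks {x : V} {k : V → ℕ} {pts : List V}
    (h : x ∈ (pts.map fun y => List.replicate (k y + 1) y).flatten) : x ∈ pts := by
  simp only [List.mem_flatten, List.mem_map] at h
  obtain ⟨L, ⟨y, hy, rfl⟩, hmem⟩ := h
  rw [List.eq_of_mem_replicate hmem]
  exact hy

end NoRev

theorem reduce {V : Type*} [MetricSpace V] [DecidableEq V] (c : V → ℝ) (ψ : List V) :
    ∃ ψ' : List V, (∀ x ∈ ψ', x ∈ ψ) ∧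
      (∃ (pts : List V) (k : V → ℕ), pts.Nodup ∧
        ψ' = (pts.map fun x => List.replicate (k x) x).flatten) ∧
      weightM c ψ' ≤ weightM c ψ ∧ (∀ x, sCount x ψ' = sCount x ψ) := by
  refine ⟨((NoRev.fdd ψ).map fun x => List.replicate (sCount x ψ + 1) x).flatten,
    ?_, ⟨NoRev.fdd ψ, fun x => sCount x ψ + 1, NoRev.fdd_nodup ψ, rfl⟩, ?_, ?_⟩
  · intro x hx
    exact NoRev.mem_fdd.mp (NoRev.mem_blocks hx)
  · have h1 := NoRev.weight_blocks (c := c) (k := fun x => sCount x ψ) (NoRev.fdd ψ)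
      (NoRev.fdd_nodup ψ)
    have h2 := NoRev.weight_lower (c := c) ψ
    have h3 : ((NoRev.fdd ψ).map fun x => (sCount x ψ : ℝ) * c x).sum = NoRev.sCost c ψ := by
      rw [NoRev.sCost_eq ψ (NoRev.fdd ψ).toFinset
        (fun x hx => List.mem_toFinset.mpr (NoRev.mem_fdd.mpr hx))]
      rw [← List.sum_toFinset _ (NoRev.fdd_nodup ψ)]
    rw [h3] at h1
    linarith
  · intro x
    rw [NoRev.sCount_blocks x _ _ (NoRev.fdd_nodup ψ)]
    by_cases hx : x ∈ NoRev.fdd ψ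
    · simp [hx]
    · rw [if_neg hx, NoRev.sCount_eq_zero (fun g => hx (NoRev.mem_fdd.mpr g))]

theorem count_bound {V : Type*} [MetricSpace V] [DecidableEq V] (c : V → ℝ) (hc : ∀ x, 1 ≤ c x)
    (ψ : List V) (x : V) : (sCount x ψ : ℝ) ≤ weightM c ψ := by
  have h2 := NoRev.weight_lower (c := c) ψ
  have h3 := NoRev.pathD_nonneg (NoRev.fdd ψ)
  have h4 : NoRev.sCost c ψ = ∑ y ∈ insert x ψ.toFinset, (sCount y ψ : ℝ) * c y :=
    NoRev.sCost_eq ψ _ (fun y hy => Finset.mem_insert_of_mem (List.mem_toFinset.mpr hy))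
  have h5 : (sCount x ψ : ℝ) * c x ≤ ∑ y ∈ insert x ψ.toFinset, (sCount y ψ : ℝ) * c y :=
    Finset.single_le_sum (f := fun y => (sCount y ψ : ℝ) * c y)
      (fun y _ => mul_nonneg (Nat.cast_nonneg _) (le_trans zero_le_one (hc y)))
      (Finset.mem_insert_self x _)
  have h6 : (sCount x ψ : ℝ) ≤ (sCount x ψ : ℝ) * c x :=
    le_mul_of_one_le_right (Nat.cast_nonneg _) (hc x)
  linarith

/-- Every schedule can be replaced by a no-revisit schedule (visiting the
distinct points in order of first appearance) of at most its weight, with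
the same search counts and hence the same detection probability; therefore
an optimal no-revisit schedule exists. -/
theorem no_revisit_optimal {V : Type*} [MetricSpace V] [DecidableEq V]
    (s : Finset V) (c : V → ℝ) (hc : ∀ x, 1 ≤ c x)
    (p β : V → ℝ) (hp : ∀ x, 0 ≤ p x) (hsum : ∑ x ∈ s, p x = 1)
    (hβ : ∀ x, 0 ≤ β x ∧ β x < 1) (T : ℝ) (hT : 0 ≤ T) :
    (∀ ψ : List V, (∀ x ∈ ψ, x ∈ s) → ∃ ψ' : List V,
        (∀ x ∈ ψ', x ∈ ψ) ∧ noRevisit ψ' ∧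
        weightM c ψ' ≤ weightM c ψ ∧
        (∀ x, sCount x ψ' = sCount x ψ) ∧
        ∑ x ∈ s, (1 - β x ^ sCount x ψ') * p x
          = ∑ x ∈ s, (1 - β x ^ sCount x ψ) * p x) ∧
    (∃ ψo : List V, (∀ x ∈ ψo, x ∈ s) ∧ weightM c ψo ≤ T ∧ noRevisit ψo ∧
        ∀ ψ : List V, (∀ x ∈ ψ, x ∈ s) → weightM c ψ ≤ T →
          ∑ x ∈ s, (1 - β x ^ sCount x ψ) * p x
            ≤ ∑ x ∈ s, (1 - β x ^ sCount x ψo) * p x) := by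
  classical
  constructor
  · intro ψ _
    obtain ⟨ψ', h1, h2, h3, h4⟩ := reduce c ψ
    exact ⟨ψ', h1, h2, h3, h4, by simp [h4]⟩
  · set N := ⌊T⌋₊ with hN
    set g : (↥s → Fin (N + 1)) → ℝ :=
      fun f => ∑ x ∈ s.attach, (1 - β x ^ (f x : ℕ)) * p x with hg
    set D : Finset (↥s → Fin (N + 1)) := Finset.univ.filter
      (fun f => ∃ ψ : List V, (∀ x ∈ ψ, x ∈ s) ∧ weightM c ψ ≤ T ∧
        ∀ x : ↥s, sCount (x : V) ψ = (f x : ℕ)) with hD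
    have hzero : (fun _ : ↥s => (⟨0, Nat.succ_pos N⟩ : Fin (N + 1))) ∈ D := by
      rw [hD, Finset.mem_filter]
      exact ⟨Finset.mem_univ _, [], by simp, by simpa [weightM] using hT, fun x => rfl⟩
    obtain ⟨f₀, hf₀D, hmax⟩ := Finset.exists_max_image D g ⟨_, hzero⟩
    obtain ⟨ψ₁, hψ₁s, hψ₁T, hψ₁f⟩ := (Finset.mem_filter.mp hf₀D).2
    obtain ⟨ψo, ho1, ho2, ho3, ho4⟩ := reduce c ψ₁
    refine ⟨ψo, fun x hx => hψ₁s x (ho1 x hx), le_trans ho3 hψ₁T, ho2, ?_⟩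
    intro ψ hψs hψT
    have hbound : ∀ x, sCount x ψ ≤ N :=
      fun x => Nat.le_floor (le_trans (count_bound c hc ψ x) hψT)
    set fψ : ↥s → Fin (N + 1) := fun x => ⟨sCount (x : V) ψ, Nat.lt_succ_of_le (hbound x)⟩
      with hfψ
    have hfψD : fψ ∈ D :=
      Finset.mem_filter.mpr ⟨Finset.mem_univ _, ψ, hψs, hψT, fun x => rfl⟩
    have h1 : ∑ x ∈ s, (1 - β x ^ sCount x ψ) * p x = g fψ := by
      rw [hg, ← Finset.sum_attach s (fun x => (1 - β x ^ sCount x ψ) * p x)]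
    have h2 : ∑ x ∈ s, (1 - β x ^ sCount x ψo) * p x = g f₀ := by
      rw [hg, ← Finset.sum_attach s (fun x => (1 - β x ^ sCount x ψo) * p x)]
      exact Finset.sum_congr rfl (fun x _ => by rw [ho4, hψ₁f x])
    rw [h1, h2]
    exact hmax fψ hfψD
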